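/- Let K be a rational function field K = K₀(T) for a nonempty set T of algebraically independent elements over K₀, and let F be a finite extension of K. Then no non-trivial valuation on F is henselian. -/

import Mathlib

open Polynomial

section Primes

variable (K₀ : Type*) [Field K₀] {T : Type*} [DecidableEq T]

noncomputable def splitEquiv (t₀ : T) :
    MvPolynomial T K₀ ≃ₐ[K₀] Polynomial (MvPolynomial {b : T // b ≠ t₀} K₀) :=
  (MvPolynomial.renameEquiv K₀ (Equiv.optionSubtypeNe t₀).symm).trans
    (MvPolynomial.optionEquivLeft K₀ _)

theorem splitEquiv_X (t₀ : T) :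
    splitEquiv K₀ t₀ (MvPolynomial.X t₀) = Polynomial.X := by
  simp [splitEquiv, MvPolynomial.renameEquiv_apply, MvPolynomial.rename_X,
    Equiv.optionSubtypeNe_symm_self, MvPolynomial.optionEquivLeft_X_none]

theorem mv_prime_X (t₀ : T) : Prime (MvPolynomial.X t₀ : MvPolynomial T K₀) := by
  have h : Prime ((splitEquiv K₀ t₀) (MvPolynomial.X t₀)) := by
    rw [splitEquiv_X]; exact Polynomial.prime_X
  exact (MulEquiv.prime_iff (splitEquiv K₀ t₀).toMulEquiv).mp h

theorem mv_prime_X_sub_one (t₀ : T) :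
    Prime (MvPolynomial.X t₀ - 1 : MvPolynomial T K₀) := by
  have h : Prime ((splitEquiv K₀ t₀) (MvPolynomial.X t₀ - 1)) := by
    rw [map_sub, map_one, splitEquiv_X]
    simpa using Polynomial.prime_X_sub_C (1 : MvPolynomial {b : T // b ≠ t₀} K₀)
  exact (MulEquiv.prime_iff (splitEquiv K₀ t₀).toMulEquiv).mp h

end Primes

section Tri

variable {R : Type*} [CommRing R] [IsDomain R] [UniqueFactorizationMonoid R]
variable {K : Type*} [Field K] [Algebra R K] [IsFractionRing R K]

theorem lin_degree_lt {A : Type*} [Semiring A] (c₁ c₀ : A) {n : ℕ} (hn : 2 ≤ n) :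
    (C c₁ * X + C c₀ : A[X]).degree < n := by
  have h1 : ((1 : ℕ) : WithBot ℕ) < (n : WithBot ℕ) := by exact_mod_cast by omega
  have h0 : ((0 : ℕ) : WithBot ℕ) < (n : WithBot ℕ) := by exact_mod_cast by omega
  refine lt_of_le_of_lt (degree_add_le _ _) (max_lt ?_ ?_)
  · exact lt_of_le_of_lt (degree_C_mul_X_le c₁) (by exact_mod_cast h1)
  · exact lt_of_le_of_lt degree_C_le (by exact_mod_cast h0)

theorem tri_monic {A : Type*} [CommRing A] [Nontrivial A] (c₁ c₀ : A) {n : ℕ} (hn : 2 ≤ n) :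
    (X ^ n + C c₁ * X + C c₀ : A[X]).Monic := by
  rw [add_assoc]
  exact monic_X_pow_add (lin_degree_lt c₁ c₀ hn)

theorem tri_degree {A : Type*} [CommRing A] [Nontrivial A] (c₁ c₀ : A) {n : ℕ} (hn : 2 ≤ n) :
    (X ^ n + C c₁ * X + C c₀ : A[X]).degree = n := by
  rw [add_assoc, degree_add_eq_left_of_degree_lt, degree_X_pow]
  rw [degree_X_pow]
  exact lin_degree_lt c₁ c₀ hn

theorem tri_irreducible {π E₁ E₀ : R} (hπ : Prime π) {m : ℕ}
    (hE₁ : π ∣ E₁) (hE₀ : π ∣ E₀) (hE₀2 : ¬ π ^ 2 ∣ E₀)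
    {e₁ e₀ lam : K} (hlam : lam ≠ 0)
    (h₁ : algebraMap R K E₁ = e₁ * lam ^ (m + 1))
    (h₀ : algebraMap R K E₀ = e₀ * lam ^ (m + 2)) :
    Irreducible (X ^ (m + 2) + C e₁ * X + C e₀ : K[X]) := by
  have hn : 2 ≤ m + 2 := by omega
  set G : R[X] := X ^ (m + 2) + C E₁ * X + C E₀ with hG
  have hGmonic : G.Monic := tri_monic _ _ hn
  have hGdeg : G.degree = (m + 2 : ℕ) := tri_degree _ _ hn
  have hGirr : Irreducible G := by
    refine irreducible_of_eisenstein_criterion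
      ((Ideal.span_singleton_prime hπ.ne_zero).mpr hπ) ?_ ?_ ?_ ?_ hGmonic.isPrimitive
    · rw [hGmonic.leadingCoeff, Ideal.mem_span_singleton]
      exact fun h => hπ.not_unit (isUnit_of_dvd_one h)
    · intro k hk
      rw [hGdeg, Nat.cast_lt] at hk
      rcases k with _ | _ | k
      · have : G.coeff 0 = E₀ := by simp [hG, coeff_X_pow]
        rw [this, Ideal.mem_span_singleton]; exact hE₀
      · have : G.coeff 1 = E₁ := by
          simp [hG, coeff_X_pow, (by omega : ¬ (1:ℕ) = m + 2)]
        rw [this, Ideal.mem_span_singleton]; exact hE₁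
      · have : G.coeff (k + 2) = 0 := by
          have hkm : ¬ k + 2 = m + 2 := by omega
          have hkm' : ¬ k = m := by omega
          have h1 : ¬ (1:ℕ) = k + 2 := by omega
          have h0 : ¬ k + 2 = 0 := by omega
          simp [hG, coeff_X_pow, coeff_X, coeff_C, hkm, hkm', h1, h0]
        rw [this]; exact Ideal.zero_mem _
    · rw [hGdeg]; exact_mod_cast by omega
    · have : G.coeff 0 = E₀ := by simp [hG, coeff_X_pow]
      rw [this, Ideal.span_singleton_pow, Ideal.mem_span_singleton]
      exact hE₀2
  have hGK : Irreducible (G.map (algebraMap R K)) :=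
    (hGmonic.irreducible_iff_irreducible_map_fraction_map).mp hGirr
  have hmap : G.map (algebraMap R K) =
      X ^ (m + 2) + C (e₁ * lam ^ (m + 1)) * X + C (e₀ * lam ^ (m + 2)) := by
    simp [hG, Polynomial.map_add, Polynomial.map_pow, Polynomial.map_mul, h₁, h₀]
  rw [hmap] at hGK
  -- scale the variable
  letI : Invertible lam := invertibleOfNonzero hlam
  let e : K[X] ≃ₐ[K] K[X] := algEquivCMulXAddC lam 0
  have he : e (X ^ (m + 2) + C (e₁ * lam ^ (m + 1)) * X + C (e₀ * lam ^ (m + 2))) =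
      C (lam ^ (m + 2)) * (X ^ (m + 2) + C e₁ * X + C e₀) := by
    show ((X:K[X]) ^ (m + 2) + C (e₁ * lam ^ (m + 1)) * X + C (e₀ * lam ^ (m + 2))).comp
      (C lam * X + C 0) = _
    simp only [map_zero, add_zero, add_comp, mul_comp, pow_comp, X_comp, C_comp]
    simp only [map_mul, map_pow]
    ring
  have hirr2 : Irreducible (C (lam ^ (m + 2)) * (X ^ (m + 2) + C e₁ * X + C e₀ : K[X])) := by
    rw [← he]
    exact (MulEquiv.irreducible_iff e.toMulEquiv).mpr hGK
  have hu : IsUnit (C (lam ^ (m + 2)) : K[X]) :=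
    isUnit_C.mpr (isUnit_iff_ne_zero.mpr (pow_ne_zero _ hlam))
  have hass : Associated (C (lam ^ (m + 2)) * (X ^ (m + 2) + C e₁ * X + C e₀ : K[X]))
      (X ^ (m + 2) + C e₁ * X + C e₀ : K[X]) := by
    rw [mul_comm]; exact associated_mul_unit_left _ _ hu
  exact hass.irreducible hirr2

end Tri

section Val

variable {K F : Type*} [Field K] [Field F] [Algebra K F]
variable {Γ₀ : Type*} [LinearOrderedCommGroupWithZero Γ₀]

theorem exists_val_lt_one [FiniteDimensional K F] (v : Valuation F Γ₀)
    (hnontriv : ∃ x : F, x ≠ 0 ∧ v x ≠ 1) :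
    ∃ z : K, z ≠ 0 ∧ v (algebraMap K F z) < 1 := by
  by_contra hcon
  push_neg at hcon
  have hone : ∀ z : K, z ≠ 0 → v (algebraMap K F z) = 1 := by
    intro z hz
    have h1 := hcon z hz
    have h2 := hcon z⁻¹ (inv_ne_zero hz)
    rw [map_inv₀, map_inv₀, one_le_inv₀ ?pos] at h2
    · exact le_antisymm h2 h1
    case pos =>
      have : algebraMap K F z ≠ 0 :=
        (map_ne_zero_iff _ (algebraMap K F).injective).mpr hz
      exact zero_lt_iff.mpr ((Valuation.ne_zero_iff v).mpr this)
  have hle : ∀ x : F, v x ≤ 1 := by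
    intro x
    rcases eq_or_ne x 0 with rfl | hx
    · simp
    by_contra hgt
    push_neg at hgt
    obtain ⟨p, pmonic, hp⟩ := IsIntegral.of_finite K x
    have hd : p.natDegree ≠ 0 := by
      intro h0
      rw [Polynomial.eq_one_of_monic_natDegree_zero pmonic h0] at hp
      simp at hp
    have hsum : aeval x p = 0 := hp
    rw [aeval_eq_sum_range, Finset.sum_range_succ] at hsum
    have hcoeff : p.coeff p.natDegree = 1 := pmonic.coeff_natDegree
    rw [hcoeff, one_smul] at hsum
    have hxm : x ^ p.natDegree =
        -∑ i ∈ Finset.range p.natDegree, p.coeff i • x ^ i := by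
      linear_combination hsum
    have hb : v (x ^ p.natDegree) ≤ v x ^ (p.natDegree - 1) := by
      rw [hxm, Valuation.map_neg]
      refine Valuation.map_sum_le v ?_
      intro i hi
      rw [Finset.mem_range] at hi
      rw [Algebra.smul_def, Valuation.map_mul, Valuation.map_pow]
      calc v (algebraMap K F (p.coeff i)) * v x ^ i ≤ 1 * v x ^ i := by
            rcases eq_or_ne (p.coeff i) 0 with h | h
            · simp [h]
            · rw [hone _ h]
          _ = v x ^ i := one_mul _
          _ ≤ v x ^ (p.natDegree - 1) := pow_le_pow_right₀ hgt.le (by omega)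
    rw [Valuation.map_pow] at hb
    have hlt : v x ^ (p.natDegree - 1) < v x ^ p.natDegree := by
      have : v x ^ p.natDegree = v x ^ (p.natDegree - 1) * v x := by
        rw [← pow_succ]; congr 1; omega
      rw [this]
      have hpos : (0:Γ₀) < v x ^ (p.natDegree - 1) :=
        zero_lt_iff.mpr (pow_ne_zero _ ((Valuation.ne_zero_iff v).mpr hx))
      exact lt_mul_of_one_lt_right hpos hgt
    exact absurd (lt_of_lt_of_le hlt hb) (lt_irrefl _)
  obtain ⟨x, hx0, hx1⟩ := hnontriv
  refine hx1 (le_antisymm (hle x) ?_)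
  have := hle x⁻¹
  rw [map_inv₀, inv_le_one₀ (zero_lt_iff.mpr ((Valuation.ne_zero_iff v).mpr hx0))] at this
  exact this

theorem val_isUnit_iff (v : Valuation F Γ₀) (x : v.valuationSubring) :
    IsUnit x ↔ v (x : F) = 1 := by
  constructor
  · rintro ⟨u, rfl⟩
    have h2 := congrArg (fun y : v.valuationSubring => v (y : F)) u.mul_inv
    simp only [OneMemClass.coe_one, Valuation.map_one] at h2
    push_cast at h2
    rw [Valuation.map_mul] at h2
    set a := ((u : v.valuationSubring) : F)
    set b := (((u⁻¹ : (v.valuationSubring)ˣ) : v.valuationSubring) : F)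
    have ha : v a ≤ 1 := (u : v.valuationSubring).2
    have hb : v b ≤ 1 := ((u⁻¹ : (v.valuationSubring)ˣ) : v.valuationSubring).2
    refine le_antisymm ha ?_
    calc (1:Γ₀) = v a * v b := h2.symm
      _ ≤ v a * 1 := mul_le_mul_right hb _
      _ = v a := mul_one _
  · intro h
    have hx0 : (x : F) ≠ 0 := by
      intro h0
      rw [h0] at h
      simp at h
    refine isUnit_iff_exists_inv.mpr ⟨⟨(x : F)⁻¹, ?_⟩, ?_⟩
    · rw [Valuation.mem_valuationSubring_iff, map_inv₀, h, inv_one]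
    · ext
      push_cast
      exact mul_inv_cancel₀ hx0

end Val

set_option maxHeartbeats 1000000 in
theorem no_nontrivial_henselian_valuation_on_function_field
    (K₀ : Type*) [Field K₀] (T : Type*) [Nonempty T]
    (F : Type*) [Field F] [Algebra (FractionRing (MvPolynomial T K₀)) F]
    [FiniteDimensional (FractionRing (MvPolynomial T K₀)) F]
    {Γ₀ : Type*} [LinearOrderedCommGroupWithZero Γ₀] (v : Valuation F Γ₀)
    (hnontriv : ∃ x : F, x ≠ 0 ∧ v x ≠ 1) :
    ¬ HenselianLocalRing ↥v.valuationSubring := by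
  classical
  intro hH
  set R := MvPolynomial T K₀ with hR
  set K := FractionRing R with hK
  obtain ⟨m, hm⟩ : ∃ m, Module.finrank K F = m + 1 :=
    ⟨Module.finrank K F - 1, by
      have := Module.finrank_pos (R := K) (M := F); omega⟩
  -- the pulled-back valuation on K
  set w : Valuation K Γ₀ := v.comap (algebraMap K F) with hw
  obtain ⟨z, hz0, hzlt⟩ := exists_val_lt_one (K := K) v hnontriv
  have hzlt : w z < 1 := hzlt
  -- construct an irreducible trinomial over K with controlled values
  obtain ⟨e₁, e₀, hirr, hv1, hv0⟩ :
      ∃ e₁ e₀ : K, Irreducible (X ^ (m + 2) + C e₁ * X + C e₀ : K[X]) ∧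
        w e₁ = 1 ∧ w e₀ < 1 := by
    obtain ⟨t₀⟩ := ‹Nonempty T›
    set t : R := MvPolynomial.X t₀ with hts
    have ht : Prime t := mv_prime_X K₀ t₀
    have ht1 : Prime (t - 1) := mv_prime_X_sub_one K₀ t₀
    set tK : K := algebraMap R K t with htK
    have htK0 : tK ≠ 0 :=
      (map_ne_zero_iff _ (IsFractionRing.injective R K)).mpr (MvPolynomial.X_ne_zero t₀)
    rcases lt_trichotomy (w tK) 1 with hτ | hτ | hτ
    · -- case B : w t < 1, Eisenstein at t - 1
      refine ⟨tK - 1, (tK - 1) * tK,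
        tri_irreducible (K := K) (E₁ := t - 1) (E₀ := (t - 1) * t) ht1 dvd_rfl
          (dvd_mul_right _ _) ?_ one_ne_zero
          (by rw [map_sub, map_one, one_pow, mul_one, htK])
          (by rw [map_mul, map_sub, map_one, one_pow, mul_one, htK]), ?_, ?_⟩
      · intro hdvd
        have h2 : (t - 1) ∣ t := by
          obtain ⟨c, hc⟩ := hdvd
          rw [pow_two, mul_assoc] at hc
          exact ⟨c, mul_left_cancel₀ ht1.ne_zero hc⟩
        have h3 : (t - 1) ∣ 1 := by
          have h4 : (t - 1) ∣ t - (t - 1) := dvd_sub h2 dvd_rfl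
          simpa using h4
        exact ht1.not_unit (isUnit_of_dvd_one h3)
      · have : w (1 - tK) = 1 := w.map_one_sub_of_lt hτ
        rw [show tK - 1 = -(1 - tK) by ring, Valuation.map_neg]
        exact this
      · have h1 : w (tK - 1) = 1 := by
          have : w (1 - tK) = 1 := w.map_one_sub_of_lt hτ
          rw [show tK - 1 = -(1 - tK) by ring, Valuation.map_neg]
          exact this
        rw [Valuation.map_mul, h1, one_mul]
        exact hτ
    · -- case A : w t = 1, Eisenstein at t
      obtain ⟨aR, bR, hbR, hzeq⟩ := IsFractionRing.div_surjective (A := R) z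
      have hb0 : bR ≠ 0 := nonZeroDivisors.ne_zero hbR
      have ha0 : aR ≠ 0 := by
        intro h
        rw [h, map_zero, zero_div] at hzeq
        exact hz0 hzeq.symm
      obtain ⟨a', haeq, hta'⟩ :=
        (FiniteMultiplicity.of_prime_left ht ha0).exists_eq_pow_mul_and_not_dvd
      obtain ⟨b', hbeq, htb'⟩ :=
        (FiniteMultiplicity.of_prime_left ht hb0).exists_eq_pow_mul_and_not_dvd
      have ha'0 : a' ≠ 0 := by rintro rfl; rw [mul_zero] at haeq; exact ha0 haeq
      have hb'0 : b' ≠ 0 := by rintro rfl; rw [mul_zero] at hbeq; exact hb0 hbeq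
      set A' : K := algebraMap R K a' with hA
      set B' : K := algebraMap R K b' with hB
      have hB0 : B' ≠ 0 := (map_ne_zero_iff _ (IsFractionRing.injective R K)).mpr hb'0
      refine ⟨tK, tK * A' / B',
        tri_irreducible (K := K) (E₁ := t * b' ^ (m + 1)) (E₀ := t * (a' * b' ^ (m + 1))) ht
          (dvd_mul_right _ _) (dvd_mul_right _ _) ?_ hB0
          (by rw [map_mul, map_pow, ← htK, ← hB])
          ?_, hτ, ?_⟩
      · -- ¬ t ^ 2 ∣ t * (a' * b' ^ (m + 1))
        intro hdvd
        have h2 : t ∣ a' * b' ^ (m + 1) := by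
          obtain ⟨c, hc⟩ := hdvd
          rw [pow_two, mul_assoc] at hc
          exact ⟨c, mul_left_cancel₀ ht.ne_zero hc⟩
        rcases ht.dvd_mul.mp h2 with h | h
        · exact hta' h
        · exact htb' (ht.dvd_of_dvd_pow h)
      · -- algebraMap (t * (a' * b' ^ (m+1))) = (tK * A' / B') * B' ^ (m + 2)
        rw [map_mul, map_mul, map_pow, ← htK, ← hA, ← hB]
        rw [div_mul_eq_mul_div, eq_div_iff hB0]
        ring
      · -- w (tK * A' / B') < 1
        have hwa : w (algebraMap R K aR) = w A' := by
          rw [haeq, map_mul, map_pow, Valuation.map_mul, Valuation.map_pow]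
          rw [← htK, hτ, one_pow, one_mul]
        have hwb : w (algebraMap R K bR) = w B' := by
          rw [hbeq, map_mul, map_pow, Valuation.map_mul, Valuation.map_pow]
          rw [← htK, hτ, one_pow, one_mul]
        have : w (tK * A' / B') = w z := by
          rw [map_div₀, Valuation.map_mul, hτ, one_mul, ← hwa, ← hwb, ← map_div₀, hzeq]
        rw [this]
        exact hzlt
    · -- case C : w t > 1, Eisenstein at t after scaling
      refine ⟨1, (tK⁻¹) ^ (m + 1),
        tri_irreducible (K := K) (E₁ := t ^ (m + 1)) (E₀ := t) ht
          (dvd_pow_self t (Nat.succ_ne_zero m)) dvd_rfl ?_ htK0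
          (by rw [map_pow, one_mul, htK])
          ?_, by rw [Valuation.map_one], ?_⟩
      · intro hdvd
        obtain ⟨c, hc⟩ := hdvd
        rw [pow_two, mul_assoc] at hc
        conv_lhs at hc => rw [← mul_one t]
        have h1 : (1 : R) = t * c := mul_left_cancel₀ ht.ne_zero hc
        exact ht.not_isUnit (IsUnit.of_mul_eq_one c h1.symm)
      · -- algebraMap t = tK⁻¹ ^ (m+1) * tK ^ (m+2)
        rw [← htK]
        calc tK = ((tK⁻¹) * tK) ^ (m + 1) * tK := by
              rw [inv_mul_cancel₀ htK0, one_pow, one_mul]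
          _ = (tK⁻¹) ^ (m + 1) * tK ^ (m + 2) := by
              rw [mul_pow, pow_succ]
              ring
      · rw [Valuation.map_pow, map_inv₀]
        refine pow_lt_one₀ zero_le' ?_ (Nat.succ_ne_zero m)
        rw [inv_lt_one₀ (zero_lt_iff.mpr (by rw [Valuation.ne_zero_iff]; exact htK0))]
        exact hτ
  -- now use henselianity to produce a root in F
  set O := v.valuationSubring with hO
  have hmem1 : algebraMap K F e₁ ∈ O := by
    rw [Valuation.mem_valuationSubring_iff]
    exact le_of_eq hv1
  have hmem0 : algebraMap K F e₀ ∈ O := by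
    rw [Valuation.mem_valuationSubring_iff]
    exact le_of_lt hv0
  set c1 : O := ⟨algebraMap K F e₁, hmem1⟩ with hc1
  set c0 : O := ⟨algebraMap K F e₀, hmem0⟩ with hc0
  set ftil : Polynomial O := X ^ (m + 2) + C c1 * X + C c0 with hftil
  have hmon : ftil.Monic := tri_monic c1 c0 (by omega)
  have heval0 : ftil.eval 0 = c0 := by
    simp [hftil, zero_pow]
  have hmemmax : ftil.eval 0 ∈ IsLocalRing.maximalIdeal O := by
    rw [heval0, IsLocalRing.mem_maximalIdeal, mem_nonunits_iff]
    intro hu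
    have := (val_isUnit_iff v c0).mp hu
    rw [hc0] at this
    exact absurd this (ne_of_lt hv0)
  have hderiv : IsUnit (ftil.derivative.eval 0) := by
    have hd : ftil.derivative.eval 0 = c1 := by
      simp [hftil, derivative_X_pow, zero_pow]
    rw [hd]
    exact (val_isUnit_iff v c1).mpr hv1
  obtain ⟨r, hroot, -⟩ := hH.is_henselian ftil hmon 0 hmemmax hderiv
  have hev : r ^ (m + 2) + c1 * r + c0 = 0 := by
    have := hroot
    simpa [hftil, Polynomial.IsRoot, eval_add, eval_pow, eval_mul] using this
  have hevF : (r : F) ^ (m + 2) + algebraMap K F e₁ * (r : F) + algebraMap K F e₀ = 0 := by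
    have h := congrArg (O.subtype) hev
    rw [map_add, map_add, map_mul, map_pow, map_zero] at h
    exact h
  set x : F := (r : F) with hx
  have haeval : (Polynomial.aeval x) (X ^ (m + 2) + C e₁ * X + C e₀ : K[X]) = 0 := by
    simp only [map_add, map_pow, map_mul, aeval_X, aeval_C]
    exact hevF
  have hmin : minpoly K x = (X ^ (m + 2) + C e₁ * X + C e₀ : K[X]) :=
    (minpoly.eq_of_irreducible_of_monic hirr haeval (tri_monic e₁ e₀ (by omega))).symm
  have hdeg : (minpoly K x).natDegree = m + 2 := by
    rw [hmin]
    exact natDegree_eq_of_degree_eq_some (tri_degree e₁ e₀ (by omega))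
  have hled : (minpoly K x).natDegree ≤ Module.finrank K F := minpoly.natDegree_le x
  rw [hdeg, hm] at hled
  omega
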